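/- Let M be a matroid on the linearly ordered finite set {1, 2, ..., n}. If D is a dependent set not containing 1 that contains at least two distinct circuits, then for every e ∈ D the set (D \ {e}) ∪ {1} is dependent. -/

import Mathlib

/-- A circuit of a matroid is a minimal dependent set. -/
def Matroid.IsCircuit' {α : Type*} (M : Matroid α) (C : Set α) : Prop :=
  M.Dep C ∧ ∀ D ⊂ C, M.Indep D

open Set

/-- Let `M` be a matroid on the linearly ordered finite set `{1, 2, ..., n}`
(modelled as `Fin n`, whose least element `0` plays the role of `1`). If `D` is a
dependent set not containing the least element that contains at least two distinct
circuits, then for every `e ∈ D` the set `(D \ {e}) ∪ {1}` is dependent. -/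
theorem insert_least_diff_dep_of_two_circuits {n : ℕ} [NeZero n]
    (M : Matroid (Fin n)) (hE : M.E = Set.univ) (D : Set (Fin n)) (hD : M.Dep D)
    (h0 : (0 : Fin n) ∉ D) (C₁ C₂ : Set (Fin n)) (hC₁ : M.IsCircuit' C₁)
    (hC₂ : M.IsCircuit' C₂) (hC₁D : C₁ ⊆ D) (hC₂D : C₂ ⊆ D) (hne : C₁ ≠ C₂) :
    ∀ e ∈ D, M.Dep ((D \ {e}) ∪ {(0 : Fin n)}) := by
  intro e he
  have hground : ∀ X : Set (Fin n), X ⊆ M.E := by simp [hE]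
  suffices hdep : M.Dep (D \ {e}) from
    hdep.superset (subset_union_left) (hground _)
  by_cases he₁ : e ∈ C₁
  · by_cases he₂ : e ∈ C₂
    · -- e in both circuits; use the elimination argument via closures
      by_contra hcon
      have hI : M.Indep (D \ {e}) := by
        rw [← M.not_indep_iff (hground _)] at hcon
        exact not_not.mp hcon
      -- pick f ∈ C₁ \ C₂
      obtain ⟨f, hf₁, hf₂⟩ : ∃ f, f ∈ C₁ ∧ f ∉ C₂ := by
        by_contra hcc
        push_neg at hcc
        have hsub : C₁ ⊆ C₂ := hcc
        rcases hsub.eq_or_ssubset with h | h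
        · exact hne h
        · exact hC₁.1.not_indep (hC₂.2 _ h)
      have hfe : f ≠ e := fun h => hf₂ (h ▸ he₂)
      -- independence of circuit minus a point
      have hind1e : M.Indep (C₁ \ {e}) := hC₁.2 _ (sdiff_singleton_ssubset.mpr he₁)
      have hind2e : M.Indep (C₂ \ {e}) := hC₂.2 _ (sdiff_singleton_ssubset.mpr he₂)
      have hind1f : M.Indep (C₁ \ {f}) := hC₁.2 _ (sdiff_singleton_ssubset.mpr hf₁)
      have heC1 : e ∈ M.closure (C₁ \ {e}) := by
        have : M.Dep (insert e (C₁ \ {e})) := by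
          rw [insert_diff_singleton, insert_eq_of_mem he₁]; exact hC₁.1
        exact (hind1e.insert_dep_iff.mp this).1
      have heC2 : e ∈ M.closure (C₂ \ {e}) := by
        have : M.Dep (insert e (C₂ \ {e})) := by
          rw [insert_diff_singleton, insert_eq_of_mem he₂]; exact hC₂.1
        exact (hind2e.insert_dep_iff.mp this).1
      have hfC1 : f ∈ M.closure (C₁ \ {f}) := by
        have : M.Dep (insert f (C₁ \ {f})) := by
          rw [insert_diff_singleton, insert_eq_of_mem hf₁]; exact hC₁.1
        exact (hind1f.insert_dep_iff.mp this).1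
      set K : Set (Fin n) := (C₁ ∪ C₂) \ {e, f} with hK
      have hKsub : K ⊆ D \ {e} := fun x hx =>
        ⟨(union_subset hC₁D hC₂D) hx.1, fun hxe => hx.2 (Or.inl hxe)⟩
      have hKind : M.Indep K := hI.subset hKsub
      have hC2K : C₂ \ {e} ⊆ K := by
        intro x hx
        exact ⟨Or.inr hx.1, by
          rintro (rfl | rfl)
          · exact hx.2 rfl
          · exact hf₂ hx.1⟩
      have heK : e ∈ M.closure K := M.closure_subset_closure hC2K heC2
      have hC1fK : C₁ \ {f} ⊆ insert e K := by
        intro x hx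
        by_cases hxe : x = e
        · exact hxe ▸ mem_insert _ _
        · exact Or.inr ⟨Or.inl hx.1, by
            rintro (rfl | rfl)
            · exact hxe rfl
            · exact hx.2 rfl⟩
      have hinsK : M.closure (insert e K) ⊆ M.closure K := by
        apply Matroid.closure_subset_closure_of_subset_closure
        exact insert_subset heK (M.subset_closure K (hground _))
      have hfK : f ∈ M.closure K :=
        hinsK (M.closure_subset_closure hC1fK hfC1)
      have hfnK : f ∉ K := fun h => h.2 (Or.inr rfl)
      have hdepK : M.Dep (insert f K) :=
        hKind.insert_dep_iff.mpr ⟨hfK, hfnK⟩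
      have : insert f K ⊆ D \ {e} :=
        insert_subset ⟨hC₁D hf₁, hfe⟩ hKsub
      exact hdepK.not_indep (hI.subset this)
    · exact hC₂.1.superset (fun x hx => ⟨hC₂D hx, fun h => he₂ (h ▸ hx)⟩) (hground _)
  · exact hC₁.1.superset (fun x hx => ⟨hC₁D hx, fun h => he₁ (h ▸ hx)⟩) (hground _)
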